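/- In the Partition-based Condorcet-control construction for deleting voters (register the t+2 voters: weight-1 voter voting p > a > b, weight-2K voter voting b > p > a, and voters of weights 2k_1,…,2k_t voting a > p > b, where Σ k_i = 2K), with deletion limit t: there exists a subcollection of at most t voters whose deletion makes p the Condorcet winner if and only if there exists I ⊆ {1,…,t} with Σ_{i∈I} k_i = K. -/

import Mathlib

/-- The three candidates. -/
inductive Cand : Type
  | p | a | b
deriving DecidableEq, Repr

instance : Fintype Cand := ⟨{Cand.p, Cand.a, Cand.b}, fun x => by cases x <;> simp⟩

/-- Rank function for the preference order `p > a > b` (smaller = preferred). -/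
def rPAB : Cand → ℕ := fun c => match c with | .p => 0 | .a => 1 | .b => 2
/-- Rank function for the preference order `b > p > a`. -/
def rBPA : Cand → ℕ := fun c => match c with | .b => 0 | .p => 1 | .a => 2
/-- Rank function for the preference order `a > p > b`. -/
def rAPB : Cand → ℕ := fun c => match c with | .a => 0 | .p => 1 | .b => 2

/-- Total weight of the voters in a weighted election. -/
def totalWeight (M : Multiset (ℕ × (Cand → ℕ))) : ℕ := (M.map Prod.fst).sum

/-- Total weight of voters preferring `c` to `d`. -/
def wPref (M : Multiset (ℕ × (Cand → ℕ))) (c d : Cand) : ℕ :=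
  (M.map (fun v => if v.2 c < v.2 d then v.1 else 0)).sum

/-- `c` is the (weighted) Condorcet winner. -/
def wCondorcet (M : Multiset (ℕ × (Cand → ℕ))) (c : Cand) : Prop :=
  ∀ d, d ≠ c → totalWeight M < 2 * wPref M c d

theorem sub_cons_cases {β : Type*} [DecidableEq β] (a : β) (s D : Multiset β) (h : D ≤ a ::ₘ s) :
    D ≤ s ∨ ∃ D', D = a ::ₘ D' ∧ D' ≤ s := by
  by_cases ha : a ∈ D
  · right
    refine ⟨D.erase a, (Multiset.cons_erase ha).symm, ?_⟩
    have := Multiset.erase_le_erase a h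
    rwa [Multiset.erase_cons_head] at this
  · left
    exact (Multiset.le_cons_of_notMem ha).mp h

theorem exists_of_le_map' {α β : Type*} [DecidableEq β] {f : α → β} {l : Multiset α} :
    ∀ {s : Multiset β}, s ≤ l.map f → ∃ l' ≤ l, s = l'.map f := by
  induction l using Multiset.induction with
  | empty => intro s h; simp at h; exact ⟨0, le_rfl, by simp [h]⟩
  | cons a l ih =>
    intro s h
    rw [Multiset.map_cons] at h
    rcases sub_cons_cases _ _ _ h with h' | ⟨s', rfl, h'⟩
    · obtain ⟨l', hl', rfl⟩ := ih h'
      exact ⟨l', hl'.trans (Multiset.le_cons_self _ _), rfl⟩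
    · obtain ⟨l', hl', rfl⟩ := ih h'
      exact ⟨a ::ₘ l', Multiset.cons_le_cons _ hl', by simp⟩

theorem tw_add (A B : Multiset (ℕ × (Cand → ℕ))) :
    totalWeight (A + B) = totalWeight A + totalWeight B := by simp [totalWeight]

theorem wPref_add (A B : Multiset (ℕ × (Cand → ℕ))) (c d : Cand) :
    wPref (A + B) c d = wPref A c d + wPref B c d := by simp [wPref]

theorem tw_cons (v : ℕ × (Cand → ℕ)) (S : Multiset (ℕ × (Cand → ℕ))) :
    totalWeight (v ::ₘ S) = v.1 + totalWeight S := by simp [totalWeight]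

theorem wPref_cons (v : ℕ × (Cand → ℕ)) (S : Multiset (ℕ × (Cand → ℕ))) (c d : Cand) :
    wPref (v ::ₘ S) c d = (if v.2 c < v.2 d then v.1 else 0) + wPref S c d := by simp [wPref]

theorem stats_map {t : ℕ} (k : Fin t → ℕ) (I : Finset (Fin t)) :
    totalWeight (I.val.map (fun i => (2 * k i, rAPB))) = 2 * ∑ i ∈ I, k i ∧
    wPref (I.val.map (fun i => (2 * k i, rAPB))) Cand.p Cand.a = 0 ∧
    wPref (I.val.map (fun i => (2 * k i, rAPB))) Cand.p Cand.b = 2 * ∑ i ∈ I, k i := by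
  have h : ∀ g : (ℕ × (Cand → ℕ)) → ℕ,
      ((I.val.map (fun i => (2 * k i, rAPB))).map g).sum = ∑ i ∈ I, g (2 * k i, rAPB) := by
    intro g
    rw [Multiset.map_map, Finset.sum_eq_multiset_sum]
    rfl
  refine ⟨?_, ?_, ?_⟩
  · simp only [totalWeight, h]
    simp [Finset.mul_sum]
  · simp only [wPref, h]
    simp [rAPB]
  · simp only [wPref, h]
    simp [rAPB, Finset.mul_sum]

/-- In the Partition-based Condorcet deleting-voters construction (voters:
weight 1 voting `p > a > b`, weight `2K` voting `b > p > a`, and weights `2k_1,…,2k_t`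
voting `a > p > b`, with `Σ k_i = 2K`), some subcollection of at most `t` voters can be
deleted so that `p` becomes the Condorcet winner iff some `I ⊆ {1,…,t}` has
`Σ_{i∈I} k_i = K`. -/
theorem stmt18 (t K : ℕ) (hK : 0 < K) (k : Fin t → ℕ) (hk : ∀ i, 0 < k i)
    (hsum : ∑ i, k i = 2 * K) :
    (∃ D ≤ ((1, rPAB) ::ₘ (2 * K, rBPA) ::ₘ
        (Finset.univ : Finset (Fin t)).val.map (fun i => (2 * k i, rAPB))),
      Multiset.card D ≤ t ∧
      wCondorcet (((1, rPAB) ::ₘ (2 * K, rBPA) ::ₘ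
        (Finset.univ : Finset (Fin t)).val.map (fun i => (2 * k i, rAPB))) - D) Cand.p) ↔
    (∃ I : Finset (Fin t), ∑ i ∈ I, k i = K) := by
  set M : Multiset (ℕ × (Cand → ℕ)) := (1, rPAB) ::ₘ (2 * K, rBPA) ::ₘ
      (Finset.univ : Finset (Fin t)).val.map (fun i => (2 * k i, rAPB)) with hM
  have hstats0 := stats_map k (Finset.univ : Finset (Fin t))
  have twM : totalWeight M = 1 + 2 * K + 2 * (2 * K) := by
    rw [hM, tw_cons, tw_cons, hstats0.1, hsum]
    omega
  have wpaM : wPref M Cand.p Cand.a = 1 + 2 * K := by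
    rw [hM, wPref_cons, wPref_cons, hstats0.2.1]
    norm_num [rPAB, rBPA]
  have wpbM : wPref M Cand.p Cand.b = 1 + 2 * (2 * K) := by
    rw [hM, wPref_cons, wPref_cons, hstats0.2.2, hsum]
    norm_num [rPAB, rBPA]
  constructor
  · rintro ⟨D, hD, hcard, hcon⟩
    have hsplit : M - D + D = M := tsub_add_cancel_of_le hD
    have ha := hcon Cand.a (by decide)
    have hb := hcon Cand.b (by decide)
    have e1 : totalWeight (M - D) + totalWeight D = 1 + 2 * K + 2 * (2 * K) := by
      rw [← tw_add, hsplit, twM]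
    have e2 : wPref (M - D) Cand.p Cand.a + wPref D Cand.p Cand.a = 1 + 2 * K := by
      rw [← wPref_add, hsplit, wpaM]
    have e3 : wPref (M - D) Cand.p Cand.b + wPref D Cand.p Cand.b = 1 + 2 * (2 * K) := by
      rw [← wPref_add, hsplit, wpbM]
    have hbound : ∀ I : Finset (Fin t), I.card < t → ∑ i ∈ I, k i + 1 ≤ 2 * K := by
      intro I hIc
      have hne : I ≠ Finset.univ := by
        intro h
        rw [h, Finset.card_univ, Fintype.card_fin] at hIc
        omega
      obtain ⟨j, hj⟩ : ∃ j, j ∉ I := by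
        by_contra h
        push_neg at h
        exact hne (Finset.eq_univ_iff_forall.mpr h)
      have h1 : ∑ i ∈ insert j I, k i ≤ ∑ i, k i :=
        Finset.sum_le_sum_of_subset (Finset.subset_univ _)
      rw [Finset.sum_insert hj, hsum] at h1
      have := hk j
      omega
    rcases sub_cons_cases _ _ D hD with h1 | ⟨D1, rfl, h1⟩
    · rcases sub_cons_cases _ _ _ h1 with h2 | ⟨D2, rfl, h2⟩
      · -- D ≤ M0 : the good case
        obtain ⟨l', hl', rfl⟩ := exists_of_le_map' h2
        set I : Finset (Fin t) :=
          ⟨l', Multiset.nodup_of_le hl' (Finset.univ : Finset (Fin t)).nodup⟩ with hI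
        have hs := stats_map k I
        refine ⟨I, ?_⟩
        rw [show I.val = l' from rfl] at hs
        omega
      · -- rBPA voter deleted: contradiction
        obtain ⟨l', hl', rfl⟩ := exists_of_le_map' h2
        set I : Finset (Fin t) :=
          ⟨l', Multiset.nodup_of_le hl' (Finset.univ : Finset (Fin t)).nodup⟩ with hI
        have hs := stats_map k I
        rw [show I.val = l' from rfl] at hs
        have hc : Multiset.card ((2 * K, rBPA) ::ₘ
            Multiset.map (fun i => (2 * k i, rAPB)) l') = I.card + 1 := by
          rw [Multiset.card_cons, Multiset.card_map]; rfl
        have hIc : I.card < t := by omega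
        have hb2 := hbound I hIc
        have d1 : totalWeight ((2 * K, rBPA) ::ₘ Multiset.map (fun i => (2 * k i, rAPB)) l')
            = 2 * K + 2 * ∑ i ∈ I, k i := by rw [tw_cons, hs.1]
        have d2 : wPref ((2 * K, rBPA) ::ₘ Multiset.map (fun i => (2 * k i, rAPB)) l')
            Cand.p Cand.a = 2 * K := by
          rw [wPref_cons, hs.2.1]; norm_num [rBPA]
        omega
    · rcases sub_cons_cases _ _ _ h1 with h2 | ⟨D2, rfl, h2⟩
      · -- rPAB voter deleted, rBPA kept: contradiction
        obtain ⟨l', hl', rfl⟩ := exists_of_le_map' h2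
        set I : Finset (Fin t) :=
          ⟨l', Multiset.nodup_of_le hl' (Finset.univ : Finset (Fin t)).nodup⟩ with hI
        have hs := stats_map k I
        rw [show I.val = l' from rfl] at hs
        have hle : ∑ i ∈ I, k i ≤ 2 * K := by
          have := Finset.sum_le_sum_of_subset (f := k) (Finset.subset_univ I)
          rwa [hsum] at this
        have d1 : totalWeight ((1, rPAB) ::ₘ Multiset.map (fun i => (2 * k i, rAPB)) l')
            = 1 + 2 * ∑ i ∈ I, k i := by rw [tw_cons, hs.1]
        have d2 : wPref ((1, rPAB) ::ₘ Multiset.map (fun i => (2 * k i, rAPB)) l')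
            Cand.p Cand.a = 1 := by
          rw [wPref_cons, hs.2.1]; norm_num [rPAB]
        have d3 : wPref ((1, rPAB) ::ₘ Multiset.map (fun i => (2 * k i, rAPB)) l')
            Cand.p Cand.b = 1 + 2 * ∑ i ∈ I, k i := by
          rw [wPref_cons, hs.2.2]; norm_num [rPAB]
        omega
      · -- both rPAB and rBPA deleted: contradiction
        obtain ⟨l', hl', rfl⟩ := exists_of_le_map' h2
        set I : Finset (Fin t) :=
          ⟨l', Multiset.nodup_of_le hl' (Finset.univ : Finset (Fin t)).nodup⟩ with hI
        have hs := stats_map k I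
        rw [show I.val = l' from rfl] at hs
        have hc : Multiset.card ((1, rPAB) ::ₘ (2 * K, rBPA) ::ₘ
            Multiset.map (fun i => (2 * k i, rAPB)) l') = I.card + 2 := by
          rw [Multiset.card_cons, Multiset.card_cons, Multiset.card_map]; rfl
        have hIc : I.card < t := by omega
        have hb2 := hbound I hIc
        have d2 : wPref ((1, rPAB) ::ₘ (2 * K, rBPA) ::ₘ
              Multiset.map (fun i => (2 * k i, rAPB)) l') Cand.p Cand.a
            = 1 + 2 * K := by
          rw [wPref_cons, wPref_cons, hs.2.1]; norm_num [rPAB, rBPA]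
        have d1 : totalWeight ((1, rPAB) ::ₘ (2 * K, rBPA) ::ₘ
              Multiset.map (fun i => (2 * k i, rAPB)) l')
            = 1 + 2 * K + 2 * ∑ i ∈ I, k i := by
          rw [tw_cons, tw_cons, hs.1]; ring
        omega
  · rintro ⟨I, hI⟩
    have hD : I.val.map (fun i => (2 * k i, rAPB)) ≤ M := by
      calc I.val.map (fun i => (2 * k i, rAPB))
          ≤ (Finset.univ : Finset (Fin t)).val.map (fun i => (2 * k i, rAPB)) :=
            Multiset.map_le_map (Finset.val_le_iff.mpr (Finset.subset_univ I))
        _ ≤ (2 * K, rBPA) ::ₘ _ := Multiset.le_cons_self _ _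
        _ ≤ M := Multiset.le_cons_self _ _
    refine ⟨I.val.map (fun i => (2 * k i, rAPB)), hD, ?_, ?_⟩
    · rw [Multiset.card_map]
      have h1 : I.card ≤ (Finset.univ : Finset (Fin t)).card := Finset.card_le_univ I
      rw [Finset.card_univ, Fintype.card_fin] at h1
      exact h1
    · have hsplit : M - I.val.map (fun i => (2 * k i, rAPB))
          + I.val.map (fun i => (2 * k i, rAPB)) = M := tsub_add_cancel_of_le hD
      have hs := stats_map k I
      have e1 : totalWeight (M - I.val.map (fun i => (2 * k i, rAPB)))
          + totalWeight (I.val.map (fun i => (2 * k i, rAPB)))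
          = 1 + 2 * K + 2 * (2 * K) := by rw [← tw_add, hsplit, twM]
      have e2 : wPref (M - I.val.map (fun i => (2 * k i, rAPB))) Cand.p Cand.a
          + wPref (I.val.map (fun i => (2 * k i, rAPB))) Cand.p Cand.a
          = 1 + 2 * K := by rw [← wPref_add, hsplit, wpaM]
      have e3 : wPref (M - I.val.map (fun i => (2 * k i, rAPB))) Cand.p Cand.b
          + wPref (I.val.map (fun i => (2 * k i, rAPB))) Cand.p Cand.b
          = 1 + 2 * (2 * K) := by rw [← wPref_add, hsplit, wpbM]
      intro d hd
      cases d with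
      | p => exact absurd rfl hd
      | a => omega
      | b => omega
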